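/- For every real y, g_{61}(y) = (1/3) sinh y + (1/3) sinh(y/2) cos(\sqrt{3} y/2) + (\sqrt{3}/3) cosh(y/2) sin(\sqrt{3} y/2). -/

import Mathlib

open Complex Finset

noncomputable def g6 (k : ℕ) (y : ℝ) : ℝ :=
  ∑' p : ℕ, y ^ (k + 6 * p) / ((k + 6 * p).factorial : ℝ)

noncomputable def om : ℂ := (1 + Real.sqrt 3 * Complex.I) / 2

lemma hs3 : ((Real.sqrt 3 : ℝ) : ℂ) ^ 2 = 3 := by
  norm_cast
  rw [Real.sq_sqrt]; norm_num

lemma hom2 : om ^ 2 = om - 1 := by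
  unfold om
  linear_combination (Complex.I ^ 2 / 4) * hs3 + (3 / 4) * Complex.I_sq

lemma hom3 : om ^ 3 = -1 := by
  have h : om ^ 3 = om * om ^ 2 := by ring
  rw [h, hom2]
  unfold om
  linear_combination (Complex.I ^ 2 / 4) * hs3 + (3 / 4) * Complex.I_sq

lemma hom6 : om ^ 6 = 1 := by
  have h : om ^ 6 = (om ^ 3) ^ 2 := by ring
  rw [h, hom3]; ring

lemma om_im : om.im = Real.sqrt 3 / 2 := by
  simp [om, Complex.div_im, Complex.add_im]

lemma om_im_ne : om.im ≠ 0 := by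
  rw [om_im]
  positivity

lemma hom_ne (t : ℕ) (h6 : t < 6) (h0 : t ≠ 0) : om ^ t ≠ 1 := by
  interval_cases t
  · exact absurd rfl h0
  · intro h; apply om_im_ne; rw [pow_one] at h; rw [h]; simp
  · intro h; rw [hom2] at h
    apply om_im_ne
    have : om = 2 := by linear_combination h
    rw [this]; simp
  · rw [hom3]; intro h; norm_num at h
  · intro h
    have h4 : om ^ 4 = -om := by
      have : om ^ 4 = om * om ^ 3 := by ring
      rw [this, hom3]; ring
    rw [h4] at h
    apply om_im_ne
    have : om = -1 := by linear_combination -h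
    rw [this]; simp
  · intro h
    have h5 : om ^ 5 = 1 - om := by
      have : om ^ 5 = om ^ 2 * om ^ 3 := by ring
      rw [this, hom2, hom3]; ring
    rw [h5] at h
    apply om_im_ne
    have : om = 0 := by linear_combination -h
    rw [this]; simp

lemma sumPow6 (n : ℕ) : ∑ r ∈ range 6, (om ^ n) ^ r = if n % 6 = 0 then 6 else 0 := by
  have hred : om ^ n = om ^ (n % 6) := by
    conv_lhs => rw [← Nat.div_add_mod n 6]
    rw [pow_add, pow_mul, hom6, one_pow, one_mul]
  split
  · next h =>
    rw [hred, h, pow_zero]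
    simp
  · next h =>
    have hne : om ^ n ≠ 1 := by
      rw [hred]
      exact hom_ne _ (Nat.mod_lt _ (by norm_num)) h
    rw [geom_sum_eq hne]
    have h6 : (om ^ n) ^ 6 = 1 := by
      rw [← pow_mul, mul_comm, pow_mul, hom6, one_pow]
    rw [h6]
    simp

lemma csummable (z : ℂ) : Summable (fun n : ℕ => z ^ n / n.factorial) := by
  apply Summable.of_norm
  have : (fun n : ℕ => ‖z ^ n / n.factorial‖) = fun n : ℕ => ‖z‖ ^ n / n.factorial := by
    funext n
    rw [norm_div, norm_pow]
    norm_num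
  rw [this]
  exact Real.summable_pow_div_factorial _

lemma cexp_tsum (z : ℂ) : Complex.exp z = ∑' n : ℕ, z ^ n / n.factorial := by
  rw [Complex.exp_eq_exp_ℂ, NormedSpace.exp_eq_tsum_div]

theorem g61_eq (y : ℝ) :
    g6 1 y = (1 / 3) * Real.sinh y
      + (1 / 3) * Real.sinh (y / 2) * Real.cos (Real.sqrt 3 * y / 2)
      + (Real.sqrt 3 / 3) * Real.cosh (y / 2) * Real.sin (Real.sqrt 3 * y / 2) := by
  -- step 1: real series as indicator series
  set g : ℕ → ℝ := fun n => if n % 6 = 1 then y ^ n / n.factorial else 0 with hgdef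
  have hinj : Function.Injective (fun p : ℕ => 1 + 6 * p) := by
    intro a b h
    have h' : 1 + 6 * a = 1 + 6 * b := h
    omega
  have hsupp : Function.support g ⊆ Set.range (fun p : ℕ => 1 + 6 * p) := by
    intro n hn
    have h1 : n % 6 = 1 := by
      by_contra hc
      apply hn
      simp [hgdef, hc]
    refine ⟨n / 6, ?_⟩
    show 1 + 6 * (n / 6) = n
    omega
  have h1 : g6 1 y = ∑' n, g n := by
    rw [g6, ← hinj.tsum_eq hsupp]
    refine tsum_congr fun p => ?_
    simp [hgdef, Nat.add_mul_mod_self_left]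
  have hgsum : Summable g := by
    apply Summable.of_norm_bounded (Real.summable_pow_div_factorial |y|)
    intro n
    simp only [hgdef]
    split
    · rw [Real.norm_eq_abs, abs_div, _root_.abs_pow, Nat.abs_cast]
    · simp only [norm_zero]
      positivity
  have h2 : ((g6 1 y : ℝ) : ℂ)
      = ∑' n : ℕ, (if n % 6 = 1 then (y : ℂ) ^ n / n.factorial else 0) := by
    rw [h1, Complex.ofReal_tsum]
    refine tsum_congr fun n => ?_
    simp only [hgdef]
    split <;> push_cast <;> ring
  -- step 2: indicator series as sum of exponentials
  have h3 : (∑ r ∈ range 6, om ^ (5 * r) * Complex.exp (om ^ r * y))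
      = ∑' n : ℕ, (if n % 6 = 1 then (6 : ℂ) else 0) * ((y : ℂ) ^ n / n.factorial) := by
    have hsm : ∀ r ∈ range 6,
        Summable (fun n : ℕ => om ^ (5 * r) * ((om ^ r * y) ^ n / n.factorial)) :=
      fun r _ => (csummable (om ^ r * y)).mul_left _
    calc ∑ r ∈ range 6, om ^ (5 * r) * Complex.exp (om ^ r * y)
        = ∑ r ∈ range 6, ∑' n : ℕ, om ^ (5 * r) * ((om ^ r * y) ^ n / n.factorial) := by
          refine Finset.sum_congr rfl fun r _ => ?_
          rw [cexp_tsum, tsum_mul_left]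
      _ = ∑' n : ℕ, ∑ r ∈ range 6, om ^ (5 * r) * ((om ^ r * y) ^ n / n.factorial) :=
          (Summable.tsum_finsetSum hsm).symm
      _ = ∑' n : ℕ, (if n % 6 = 1 then (6 : ℂ) else 0) * ((y : ℂ) ^ n / n.factorial) := by
          refine tsum_congr fun n => ?_
          have e1 : ∀ r, om ^ (5 * r) * ((om ^ r * y) ^ n / n.factorial)
              = (om ^ (5 + n)) ^ r * ((y : ℂ) ^ n / n.factorial) := by
            intro r
            rw [mul_pow, ← pow_mul, ← pow_mul]
            rw [show (5 + n) * r = 5 * r + r * n by ring, pow_add, pow_mul]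
            ring
          simp only [e1, ← Finset.sum_mul, sumPow6]
          congr 1
          have : (5 + n) % 6 = 0 ↔ n % 6 = 1 := by omega
          split
          · next h => rw [if_pos (this.mp h)]
          · next h => rw [if_neg (fun hc => h (this.mpr hc))]
  have h4 : ((g6 1 y : ℝ) : ℂ)
      = (1 / 6) * ∑ r ∈ range 6, om ^ (5 * r) * Complex.exp (om ^ r * y) := by
    rw [h2, h3, ← tsum_mul_left]
    refine tsum_congr fun n => ?_
    split <;> ring
  -- step 3: evaluate exponentials
  have key : ∀ a b : ℝ, Complex.exp ((a : ℂ) + (b : ℂ) * Complex.I)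
      = (Real.exp a : ℂ) * ((Real.cos b : ℂ) + (Real.sin b : ℂ) * Complex.I) := by
    intro a b
    rw [Complex.exp_add, Complex.exp_mul_I, ← Complex.ofReal_exp,
      ← Complex.ofReal_cos, ← Complex.ofReal_sin]
  apply Complex.ofReal_injective
  rw [h4]
  -- expand the finite sum
  rw [show (6 : ℕ) = 5 + 1 from rfl, Finset.sum_range_succ, Finset.sum_range_succ,
    Finset.sum_range_succ, Finset.sum_range_succ, Finset.sum_range_succ,
    Finset.sum_range_succ, Finset.sum_range_zero]
  simp only [Nat.reduceMul, Nat.mul_zero, pow_zero, pow_one, one_mul, zero_add]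
  have h4' : om ^ 4 = -om := by
    have : om ^ 4 = om * om ^ 3 := by ring
    rw [this, hom3]; ring
  have h5' : om ^ 5 = 1 - om := by
    have : om ^ 5 = om ^ 2 * om ^ 3 := by ring
    rw [this, hom2, hom3]; ring
  have h10 : om ^ 10 = -om := by
    have : om ^ 10 = om ^ 6 * om ^ 4 := by ring
    rw [this, hom6, h4']; ring
  have h15 : om ^ 15 = -1 := by
    have : om ^ 15 = om ^ 6 * om ^ 6 * om ^ 3 := by ring
    rw [this, hom6, hom3]; ring
  have h20 : om ^ 20 = om - 1 := by
    have : om ^ 20 = om ^ 6 * om ^ 6 * om ^ 6 * om ^ 2 := by ring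
    rw [this, hom6, hom2]; ring
  have h25 : om ^ 25 = om := by
    have : om ^ 25 = (om ^ 6) ^ 4 * om := by ring
    rw [this, hom6]; ring
  have e0 : Complex.exp ((y : ℝ) : ℂ) = (Real.exp y : ℂ) := (Complex.ofReal_exp y).symm
  have e3 : Complex.exp (om ^ 3 * (y : ℂ)) = (Real.exp (-y) : ℂ) := by
    rw [hom3, show (-1 : ℂ) * (y : ℂ) = ((-y : ℝ) : ℂ) by push_cast; ring]
    exact (Complex.ofReal_exp _).symm
  have e1 : Complex.exp (om * (y : ℂ))
      = (Real.exp (y / 2) : ℂ) * ((Real.cos (Real.sqrt 3 * y / 2) : ℂ)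
        + (Real.sin (Real.sqrt 3 * y / 2) : ℂ) * Complex.I) := by
    rw [show om * (y : ℂ) = ((y / 2 : ℝ) : ℂ) + ((Real.sqrt 3 * y / 2 : ℝ) : ℂ) * Complex.I by
      unfold om; push_cast; ring]
    exact key _ _
  have e2 : Complex.exp (om ^ 2 * (y : ℂ))
      = (Real.exp (-(y / 2)) : ℂ) * ((Real.cos (Real.sqrt 3 * y / 2) : ℂ)
        + (Real.sin (Real.sqrt 3 * y / 2) : ℂ) * Complex.I) := by
    rw [hom2, show (om - 1) * (y : ℂ)
        = ((-(y / 2) : ℝ) : ℂ) + ((Real.sqrt 3 * y / 2 : ℝ) : ℂ) * Complex.I by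
      unfold om; push_cast; ring]
    exact key _ _
  have e4 : Complex.exp (om ^ 4 * (y : ℂ))
      = (Real.exp (-(y / 2)) : ℂ) * ((Real.cos (Real.sqrt 3 * y / 2) : ℂ)
        - (Real.sin (Real.sqrt 3 * y / 2) : ℂ) * Complex.I) := by
    rw [h4', show -om * (y : ℂ)
        = ((-(y / 2) : ℝ) : ℂ) + ((-(Real.sqrt 3 * y / 2) : ℝ) : ℂ) * Complex.I by
      unfold om; push_cast; ring]
    rw [key, Real.cos_neg, Real.sin_neg]
    push_cast
    ring
  have e5 : Complex.exp (om ^ 5 * (y : ℂ))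
      = (Real.exp (y / 2) : ℂ) * ((Real.cos (Real.sqrt 3 * y / 2) : ℂ)
        - (Real.sin (Real.sqrt 3 * y / 2) : ℂ) * Complex.I) := by
    rw [h5', show (1 - om) * (y : ℂ)
        = ((y / 2 : ℝ) : ℂ) + ((-(Real.sqrt 3 * y / 2) : ℝ) : ℂ) * Complex.I by
      unfold om; push_cast; ring]
    rw [key, Real.cos_neg, Real.sin_neg]
    push_cast
    ring
  rw [e0, e1, e2, e3, e4, e5, h5', h10, h15, h20, h25]
  simp only [Real.sinh_eq, Real.cosh_eq]
  push_cast
  unfold om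
  linear_combination (-((Real.sqrt 3 : ℂ) * Complex.sin ((Real.sqrt 3 : ℂ) * (y : ℂ) / 2)
    * (Complex.exp ((y : ℂ) / 2) + Complex.exp (-((y : ℂ) / 2)))) / 6) * Complex.I_sq
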